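/- Entropy extremization for BPS rotating black holes in AdS₅×S⁵: Fix G > 0, a, b ∈ [0,1) and μ₁, μ₂, μ₃ > 0; set Ξ_a = 1−a², Ξ_b = 1−b², γ₁ = μ₁+μ₂+μ₃, γ₂ = μ₁μ₂+μ₁μ₃+μ₂μ₃, γ₃ = μ₁μ₂μ₃ and 𝒥 = (1+μ₁)(1+μ₂)(1+μ₃). Assume the BPS constraint γ₁ = [ 2((a+b)+ab) + 3(1 − √(Ξ_aΞ_b)) ]/√(Ξ_aΞ_b), the regularity condition μ_I > √(Ξ_b/Ξ_a) − 1 for all I (when a ≥ b), and that R := γ₃(1+γ₁) − γ₂²/4 − ((√Ξ_a − √Ξ_b)²/√(Ξ_aΞ_b))·𝒥 > 0. Define Q_I = (π/(4G))·[ μ_I + (γ₂ − 2γ₃/μ_I)/2 ], J_ψ = (π/(4G))·[ γ₂/2 + γ₃ + (√(Ξ_a/Ξ_b) − 1)·𝒥 ], J_φ = (π/(4G))·[ γ₂/2 + γ₃ + (√(Ξ_b/Ξ_a) − 1)·𝒥 ], and S_BH = (π²/(2G))·√R. Then there exist complex numbers Δ₁, Δ₂, Δ₃, ω₁, ω₂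 with ω₁ω₂ ≠ 0 and Δ₁+Δ₂+Δ₃+ω₁+ω₂ = 1, and Λ ∈ ℂ, such that the function ℐ(Δ,ω) = (iπ²/(2G))·Δ₁Δ₂Δ₃/(ω₁ω₂) + 2πi·Σ_I Q_I Δ_I − 2πi·(J_φ ω₁ + J_ψ ω₂) has all five partial derivatives at this point equal to Λ (the Lagrange condition for a constrained critical point), and ℐ there equals S_BH. -/

import Mathlib

set_option maxHeartbeats 4000000

open Real

theorem auxC (G S Q1 Q2 Q3 Jφ Jψ : ℝ) (hG : 0 < G) (hS : 0 < S)
    (hRe : G * S^2 = 4*π^2*G*(Q1*Q2+Q1*Q3+Q2*Q3) - π^3*(Jφ+Jψ))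
    (hIm : S^2*(4*π*G*(Q1+Q2+Q3) + π^2) = 16*π^3*G*(Q1*Q2*Q3) + 4*π^4*(Jφ*Jψ))
    (Ifn : ℂ → ℂ → ℂ → ℂ → ℂ → ℂ)
    (hIfn : ∀ d1 d2 d3 w1 w2, Ifn d1 d2 d3 w1 w2 =
      Complex.I * (π : ℂ) ^ 2 / (2 * (G : ℂ)) * d1 * d2 * d3 / (w1 * w2)
      + 2 * (π : ℂ) * Complex.I * ((Q1 : ℂ) * d1 + (Q2 : ℂ) * d2 + (Q3 : ℂ) * d3)
      - 2 * (π : ℂ) * Complex.I * ((Jφ : ℂ) * w1 + (Jψ : ℂ) * w2)) :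
    ∃ (d1 d2 d3 w1 w2 Λ : ℂ), w1 * w2 ≠ 0 ∧ d1 + d2 + d3 + w1 + w2 = 1 ∧
      deriv (fun z => Ifn z d2 d3 w1 w2) d1 = Λ ∧
      deriv (fun z => Ifn d1 z d3 w1 w2) d2 = Λ ∧
      deriv (fun z => Ifn d1 d2 z w1 w2) d3 = Λ ∧
      deriv (fun z => Ifn d1 d2 d3 z w2) w1 = Λ ∧
      deriv (fun z => Ifn d1 d2 d3 w1 z) w2 = Λ ∧
      Ifn d1 d2 d3 w1 w2 = (S : ℂ) := by
  have hπ : (0:ℝ) < π := Real.pi_pos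
  have hGC : (G:ℂ) ≠ 0 := Complex.ofReal_ne_zero.2 (ne_of_gt hG)
  have hπC : (π:ℂ) ≠ 0 := Complex.ofReal_ne_zero.2 (ne_of_gt hπ)
  have hSC : (S:ℂ) ≠ 0 := Complex.ofReal_ne_zero.2 (ne_of_gt hS)
  have hReC : (G:ℂ) * (S:ℂ)^2 = 4*(π:ℂ)^2*(G:ℂ)*((Q1:ℂ)*Q2+(Q1:ℂ)*Q3+(Q2:ℂ)*Q3)
      - (π:ℂ)^3*((Jφ:ℂ)+(Jψ:ℂ)) := by exact_mod_cast congrArg (Complex.ofReal) hRe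
  have hImC : (S:ℂ)^2*(4*(π:ℂ)*(G:ℂ)*((Q1:ℂ)+Q2+Q3) + (π:ℂ)^2)
      = 16*(π:ℂ)^3*(G:ℂ)*((Q1:ℂ)*Q2*Q3) + 4*(π:ℂ)^4*((Jφ:ℂ)*(Jψ:ℂ)) := by
    exact_mod_cast congrArg (Complex.ofReal) hIm
  obtain ⟨A1, hA1⟩ : ∃ z : ℂ, z = (S:ℂ) - 2*π*Complex.I*Q1 := ⟨_, rfl⟩
  obtain ⟨A2, hA2⟩ : ∃ z : ℂ, z = (S:ℂ) - 2*π*Complex.I*Q2 := ⟨_, rfl⟩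
  obtain ⟨A3, hA3⟩ : ∃ z : ℂ, z = (S:ℂ) - 2*π*Complex.I*Q3 := ⟨_, rfl⟩
  obtain ⟨B1, hB1⟩ : ∃ z : ℂ, z = (S:ℂ) + 2*π*Complex.I*Jφ := ⟨_, rfl⟩
  obtain ⟨B2, hB2⟩ : ∃ z : ℂ, z = (S:ℂ) + 2*π*Complex.I*Jψ := ⟨_, rfl⟩
  obtain ⟨P, hPdef⟩ : ∃ z : ℂ, Complex.I*(π:ℂ)^2/(2*(G:ℂ)) = z := ⟨_, rfl⟩
  obtain ⟨U, hUdef⟩ : ∃ z : ℂ, z = A1*A2 + A1*A3 + A2*A3 - P*(B1+B2) := ⟨_, rfl⟩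
  have hPne : P ≠ 0 := by
    rw [← hPdef]
    simp [hGC, hπC, Complex.I_ne_zero]
  have keyC : (2*(G:ℂ)) * (A1*A2*A3) = Complex.I*(π:ℂ)^2*(B1*B2) := by
    rw [hA1, hA2, hA3, hB1, hB2]
    linear_combination 2*(S:ℂ)*hReC - Complex.I*hImC + (8*(G:ℂ)*S*(π:ℂ)^2*((Q1:ℂ)*Q2+(Q1:ℂ)*Q3+(Q2:ℂ)*Q3) - 16*(G:ℂ)*(π:ℂ)^3*Complex.I*((Q1:ℂ)*Q2*Q3) - 2*(S:ℂ)*(π:ℂ)^3*((Jφ:ℂ)+(Jψ:ℂ)) - 4*(π:ℂ)^4*Complex.I*((Jφ:ℂ)*(Jψ:ℂ)))*Complex.I_sq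
  have keyP : A1*A2*A3 = P*(B1*B2) := by
    rw [← hPdef]
    rw [div_mul_eq_mul_div, eq_div_iff (by simp [hGC] : (2*(G:ℂ)) ≠ 0)]
    linear_combination keyC
  have hAne : ∀ Q : ℝ, (S:ℂ) - 2*π*Complex.I*Q ≠ 0 := by
    intro Q h
    have h2 : (S:ℂ).re = (2*π*Complex.I*(Q:ℂ)).re := by
      rw [sub_eq_zero] at h; rw [h]
    simp at h2
    exact (ne_of_gt hS) h2
  have hBne : ∀ Jx : ℝ, (S:ℂ) + 2*π*Complex.I*Jx ≠ 0 := by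
    intro Jx h
    have h2 : (S:ℂ).re = (-(2*π*Complex.I*(Jx:ℂ))).re := by
      rw [← eq_neg_of_add_eq_zero_left h]
    simp at h2
    exact (ne_of_gt hS) h2
  have hA1ne : A1 ≠ 0 := hA1 ▸ hAne Q1
  have hA2ne : A2 ≠ 0 := hA2 ▸ hAne Q2
  have hA3ne : A3 ≠ 0 := hA3 ▸ hAne Q3
  have hB1ne : B1 ≠ 0 := hB1 ▸ hBne Jφ
  have hB2ne : B2 ≠ 0 := hB2 ▸ hBne Jψ
  have hUreal : U = ((3*S^2 - 4*π^2*(Q1*Q2+Q1*Q3+Q2*Q3) + π^3/G*(Jφ+Jψ) : ℝ) : ℂ)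
      + Complex.I * ((-(4*π*S*(Q1+Q2+Q3)) - π^2*S/G : ℝ) : ℂ) := by
    rw [hUdef, hA1, hA2, hA3, hB1, hB2, ← hPdef]
    push_cast
    field_simp
    linear_combination ((8*(π:ℂ)^2*(G:ℂ)*((Q1:ℂ)*Q2+(Q1:ℂ)*Q3+(Q2:ℂ)*Q3)
      - 2*(π:ℂ)^3*((Jφ:ℂ)+(Jψ:ℂ)))) * Complex.I_sq
  have hUre : U.re = 3*S^2 - 4*π^2*(Q1*Q2+Q1*Q3+Q2*Q3) + π^3/G*(Jφ+Jψ) := by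
    rw [hUreal]
    simp [← Complex.ofReal_pow, Complex.mul_re]
  have hUne : U ≠ 0 := by
    intro h
    rw [h] at hUre
    simp at hUre
    have hGne : G ≠ 0 := ne_of_gt hG
    have h6 : G * 0 = G * (3*S^2 - 4*π^2*(Q1*Q2+Q1*Q3+Q2*Q3) + π^3/G*(Jφ+Jψ)) := by
      rw [← hUre]
    rw [mul_zero] at h6
    field_simp at h6
    nlinarith [hS, hG, mul_pos hG (mul_pos hS hS)]
  have hw1ne : -(P*B2)/U ≠ 0 := by
    apply div_ne_zero _ hUne
    simp [hB2ne, hPne]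
  have hw2ne : -(P*B1)/U ≠ 0 := by
    apply div_ne_zero _ hUne
    simp [hB1ne, hPne]
  refine ⟨A2*A3/U, A1*A3/U, A1*A2/U, -(P*B2)/U, -(P*B1)/U, (S:ℂ), mul_ne_zero hw1ne hw2ne, ?_, ?_, ?_, ?_, ?_, ?_, ?_⟩
  · have hsum : A2*A3/U + A1*A3/U + A1*A2/U + -(P*B2)/U + -(P*B1)/U
        = (A2*A3 + A1*A3 + A1*A2 + -(P*B2) + -(P*B1))/U := by ring
    rw [hsum, div_eq_one_iff_eq hUne, hUdef]
    ring
  · have e : (fun z => Ifn (z) (A1*A3/U) (A1*A2/U) (-(P*B2)/U) (-(P*B1)/U)) = fun z => (P*(A1*A3/U)*(A1*A2/U)/((-(P*B2)/U)*(-(P*B1)/U)) + 2*(π:ℂ)*Complex.I*(Q1:ℂ)) * z + (2*(π:ℂ)*Complex.I*((Q2:ℂ)*(A1*A3/U) + (Q3:ℂ)*(A1*A2/U)) - 2*(π:ℂ)*Complex.I*((Jφ:ℂ)*(-(P*B2)/U) + (Jψ:ℂ)*(-(P*B1)/U))) := by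
      funext z; rw [hIfn, hPdef]; ring
    rw [e, (((hasDerivAt_id' _).const_mul (P*(A1*A3/U)*(A1*A2/U)/((-(P*B2)/U)*(-(P*B1)/U)) + 2*(π:ℂ)*Complex.I*(Q1:ℂ))).add_const (2*(π:ℂ)*Complex.I*((Q2:ℂ)*(A1*A3/U) + (Q3:ℂ)*(A1*A2/U)) - 2*(π:ℂ)*Complex.I*((Jφ:ℂ)*(-(P*B2)/U) + (Jψ:ℂ)*(-(P*B1)/U)))).deriv]

    field_simp
    linear_combination A1*keyP + (P*B1*B2)*hA1
  · have e : (fun z => Ifn (A2*A3/U) (z) (A1*A2/U) (-(P*B2)/U) (-(P*B1)/U)) = fun z => (P*(A2*A3/U)*(A1*A2/U)/((-(P*B2)/U)*(-(P*B1)/U)) + 2*(π:ℂ)*Complex.I*(Q2:ℂ)) * z + (2*(π:ℂ)*Complex.I*((Q1:ℂ)*(A2*A3/U) + (Q3:ℂ)*(A1*A2/U)) - 2*(π:ℂ)*Complex.I*((Jφ:ℂ)*(-(P*B2)/U) + (Jψ:ℂ)*(-(P*B1)/U))) := by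
      funext z; rw [hIfn, hPdef]; ring
    rw [e, (((hasDerivAt_id' _).const_mul (P*(A2*A3/U)*(A1*A2/U)/((-(P*B2)/U)*(-(P*B1)/U)) + 2*(π:ℂ)*Complex.I*(Q2:ℂ))).add_const (2*(π:ℂ)*Complex.I*((Q1:ℂ)*(A2*A3/U) + (Q3:ℂ)*(A1*A2/U)) - 2*(π:ℂ)*Complex.I*((Jφ:ℂ)*(-(P*B2)/U) + (Jψ:ℂ)*(-(P*B1)/U)))).deriv]

    field_simp
    linear_combination A2*keyP + (P*B1*B2)*hA2
  · have e : (fun z => Ifn (A2*A3/U) (A1*A3/U) (z) (-(P*B2)/U) (-(P*B1)/U)) = fun z => (P*(A2*A3/U)*(A1*A3/U)/((-(P*B2)/U)*(-(P*B1)/U)) + 2*(π:ℂ)*Complex.I*(Q3:ℂ)) * z + (2*(π:ℂ)*Complex.I*((Q1:ℂ)*(A2*A3/U) + (Q2:ℂ)*(A1*A3/U)) - 2*(π:ℂ)*Complex.I*((Jφ:ℂ)*(-(P*B2)/U) + (Jψ:ℂ)*(-(P*B1)/U))) := by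
      funext z; rw [hIfn, hPdef]; ring
    rw [e, (((hasDerivAt_id' _).const_mul (P*(A2*A3/U)*(A1*A3/U)/((-(P*B2)/U)*(-(P*B1)/U)) + 2*(π:ℂ)*Complex.I*(Q3:ℂ))).add_const (2*(π:ℂ)*Complex.I*((Q1:ℂ)*(A2*A3/U) + (Q2:ℂ)*(A1*A3/U)) - 2*(π:ℂ)*Complex.I*((Jφ:ℂ)*(-(P*B2)/U) + (Jψ:ℂ)*(-(P*B1)/U)))).deriv]

    field_simp
    linear_combination A3*keyP + (P*B1*B2)*hA3
  · have e : (fun z => Ifn (A2*A3/U) (A1*A3/U) (A1*A2/U) z (-(P*B1)/U)) = fun z => (P*(A2*A3/U)*(A1*A3/U)*(A1*A2/U)/(-(P*B1)/U)) * z⁻¹ + ((-(2*(π:ℂ)*Complex.I*(Jφ:ℂ))) * z + (2*(π:ℂ)*Complex.I*((Q1:ℂ)*(A2*A3/U) + (Q2:ℂ)*(A1*A3/U) + (Q3:ℂ)*(A1*A2/U)) - 2*(π:ℂ)*Complex.I*((Jψ:ℂ)*(-(P*B1)/U)))) := by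
      funext z; rw [hIfn, hPdef]; ring
    rw [e]; refine Eq.trans (((hasDerivAt_inv hw1ne).const_mul (P*(A2*A3/U)*(A1*A3/U)*(A1*A2/U)/(-(P*B1)/U))).add
      (((hasDerivAt_id' _).const_mul (-(2*(π:ℂ)*Complex.I*(Jφ:ℂ)))).add_const (2*(π:ℂ)*Complex.I*((Q1:ℂ)*(A2*A3/U) + (Q2:ℂ)*(A1*A3/U) + (Q3:ℂ)*(A1*A2/U)) - 2*(π:ℂ)*Complex.I*((Jψ:ℂ)*(-(P*B1)/U))))).deriv ?_
    field_simp [hw1ne, hw2ne, hPne, hUne, hB1ne, hB2ne]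
    linear_combination (A1*A2*A3 + P*(B1*B2))*keyP + (P^2*B1*B2^2)*hB1
  · have e : (fun z => Ifn (A2*A3/U) (A1*A3/U) (A1*A2/U) (-(P*B2)/U) z) = fun z => (P*(A2*A3/U)*(A1*A3/U)*(A1*A2/U)/(-(P*B2)/U)) * z⁻¹ + ((-(2*(π:ℂ)*Complex.I*(Jψ:ℂ))) * z + (2*(π:ℂ)*Complex.I*((Q1:ℂ)*(A2*A3/U) + (Q2:ℂ)*(A1*A3/U) + (Q3:ℂ)*(A1*A2/U)) - 2*(π:ℂ)*Complex.I*((Jφ:ℂ)*(-(P*B2)/U)))) := by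
      funext z; rw [hIfn, hPdef]; ring
    rw [e]; refine Eq.trans (((hasDerivAt_inv hw2ne).const_mul (P*(A2*A3/U)*(A1*A3/U)*(A1*A2/U)/(-(P*B2)/U))).add
      (((hasDerivAt_id' _).const_mul (-(2*(π:ℂ)*Complex.I*(Jψ:ℂ)))).add_const (2*(π:ℂ)*Complex.I*((Q1:ℂ)*(A2*A3/U) + (Q2:ℂ)*(A1*A3/U) + (Q3:ℂ)*(A1*A2/U)) - 2*(π:ℂ)*Complex.I*((Jφ:ℂ)*(-(P*B2)/U))))).deriv ?_
    field_simp [hw1ne, hw2ne, hPne, hUne, hB1ne, hB2ne]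
    linear_combination (A1*A2*A3 + P*(B1*B2))*keyP + (P^2*B2*B1^2)*hB2
  · rw [hIfn, hPdef]
    field_simp [hw1ne, hw2ne, hPne, hUne, hB1ne, hB2ne]
    linear_combination (A1*A2*A3 + P*(B1*B2) - 3*P*(B1*B2))*keyP
      + (P*B1*B2*(A2*A3))*hA1 + (P*B1*B2*(A1*A3))*hA2 + (P*B1*B2*(A1*A2))*hA3
      - (P^2*B1*B2*B2)*hB1 - (P^2*B1*B2*B1)*hB2
      - ((S:ℂ)*P*B1*B2)*hUdef

/-- Entropy extremization for BPS rotating black holes in AdS₅×S⁵: for a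
supersymmetric black hole labeled by `(μ₁,μ₂,μ₃,a,b)` subject to the BPS
constraint, with electric charges `Q_I`, angular momenta `J_φ, J_ψ` and
entropy `S_BH = (π²/(2G))√R`, there exists a constrained critical point
(complex chemical potentials with `Δ₁+Δ₂+Δ₃+ω₁+ω₂ = 1`, all five partial
derivatives equal to the Lagrange multiplier `Λ`) of
`ℐ = (iπ²/(2G))Δ₁Δ₂Δ₃/(ω₁ω₂) + 2πiΣQ_IΔ_I − 2πi(J_φω₁ + J_ψω₂)`
at which `ℐ = S_BH`. -/
theorem stmt18 (G a b μ1 μ2 μ3 : ℝ)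
    (hG : 0 < G) (ha0 : 0 ≤ a) (ha1 : a < 1) (hb0 : 0 ≤ b) (hb1 : b < 1)
    (hμ1 : 0 < μ1) (hμ2 : 0 < μ2) (hμ3 : 0 < μ3)
    (Ξa Ξb γ1 γ2 γ3 J R : ℝ)
    (hΞa : Ξa = 1 - a ^ 2) (hΞb : Ξb = 1 - b ^ 2)
    (hγ1 : γ1 = μ1 + μ2 + μ3) (hγ2 : γ2 = μ1 * μ2 + μ1 * μ3 + μ2 * μ3)
    (hγ3 : γ3 = μ1 * μ2 * μ3)
    (hJ : J = (1 + μ1) * (1 + μ2) * (1 + μ3))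
    (hBPS : γ1 = (2 * ((a + b) + a * b) + 3 * (1 - Real.sqrt (Ξa * Ξb)))
      / Real.sqrt (Ξa * Ξb))
    (hab : b ≤ a)
    (hreg1 : Real.sqrt (Ξb / Ξa) - 1 < μ1)
    (hreg2 : Real.sqrt (Ξb / Ξa) - 1 < μ2)
    (hreg3 : Real.sqrt (Ξb / Ξa) - 1 < μ3)
    (hR : R = γ3 * (1 + γ1) - γ2 ^ 2 / 4
      - (Real.sqrt Ξa - Real.sqrt Ξb) ^ 2 / Real.sqrt (Ξa * Ξb) * J)
    (hRpos : 0 < R)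
    (Q1 Q2 Q3 Jψ Jφ SBH : ℝ)
    (hQ1 : Q1 = π / (4 * G) * (μ1 + (γ2 - 2 * γ3 / μ1) / 2))
    (hQ2 : Q2 = π / (4 * G) * (μ2 + (γ2 - 2 * γ3 / μ2) / 2))
    (hQ3 : Q3 = π / (4 * G) * (μ3 + (γ2 - 2 * γ3 / μ3) / 2))
    (hJψ : Jψ = π / (4 * G) * (γ2 / 2 + γ3 + (Real.sqrt (Ξa / Ξb) - 1) * J))
    (hJφ : Jφ = π / (4 * G) * (γ2 / 2 + γ3 + (Real.sqrt (Ξb / Ξa) - 1) * J))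
    (hSBH : SBH = π ^ 2 / (2 * G) * Real.sqrt R)
    (Ifn : ℂ → ℂ → ℂ → ℂ → ℂ → ℂ)
    (hIfn : ∀ d1 d2 d3 w1 w2, Ifn d1 d2 d3 w1 w2 =
      Complex.I * (π : ℂ) ^ 2 / (2 * (G : ℂ)) * d1 * d2 * d3 / (w1 * w2)
      + 2 * (π : ℂ) * Complex.I * ((Q1 : ℂ) * d1 + (Q2 : ℂ) * d2 + (Q3 : ℂ) * d3)
      - 2 * (π : ℂ) * Complex.I * ((Jφ : ℂ) * w1 + (Jψ : ℂ) * w2)) :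
    ∃ (d1 d2 d3 w1 w2 Λ : ℂ), w1 * w2 ≠ 0 ∧ d1 + d2 + d3 + w1 + w2 = 1 ∧
      deriv (fun z => Ifn z d2 d3 w1 w2) d1 = Λ ∧
      deriv (fun z => Ifn d1 z d3 w1 w2) d2 = Λ ∧
      deriv (fun z => Ifn d1 d2 z w1 w2) d3 = Λ ∧
      deriv (fun z => Ifn d1 d2 d3 z w2) w1 = Λ ∧
      deriv (fun z => Ifn d1 d2 d3 w1 z) w2 = Λ ∧
      Ifn d1 d2 d3 w1 w2 = (SBH : ℂ) := by
  have hπ : (0:ℝ) < π := Real.pi_pos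
  have hΞa0 : (0:ℝ) < Ξa := by rw [hΞa]; nlinarith
  have hΞb0 : (0:ℝ) < Ξb := by rw [hΞb]; nlinarith
  have hsa0 : 0 < Real.sqrt Ξa := Real.sqrt_pos.2 hΞa0
  have hsb0 : 0 < Real.sqrt Ξb := Real.sqrt_pos.2 hΞb0
  have hxy : Real.sqrt (Ξa * Ξb) = Real.sqrt Ξa * Real.sqrt Ξb :=
    Real.sqrt_mul hΞa0.le Ξb
  have hxdy : Real.sqrt (Ξa / Ξb) = Real.sqrt Ξa / Real.sqrt Ξb :=
    Real.sqrt_div hΞa0.le Ξb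
  have hydx : Real.sqrt (Ξb / Ξa) = Real.sqrt Ξb / Real.sqrt Ξa :=
    Real.sqrt_div hΞb0.le Ξa
  have hSBH2 : SBH^2 = (π^2/(2*G))^2 * R := by
    rw [hSBH, mul_pow, Real.sq_sqrt hRpos.le]
  have hSpos : 0 < SBH := by
    rw [hSBH]
    exact mul_pos (by positivity) (Real.sqrt_pos.2 hRpos)
  have hRe : G * SBH^2 = 4*π^2*G*(Q1*Q2+Q1*Q3+Q2*Q3) - π^3*(Jφ+Jψ) := by
    rw [hSBH2, hR, hQ1, hQ2, hQ3, hJφ, hJψ, hJ, hγ1, hγ2, hγ3, hxy, hxdy, hydx]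
    field_simp
    ring
  have hIm : SBH^2*(4*π*G*(Q1+Q2+Q3) + π^2) = 16*π^3*G*(Q1*Q2*Q3) + 4*π^4*(Jφ*Jψ) := by
    rw [hSBH2, hR, hQ1, hQ2, hQ3, hJφ, hJψ, hJ, hγ1, hγ2, hγ3, hxy, hxdy, hydx]
    field_simp
    ring
  exact auxC G SBH Q1 Q2 Q3 Jφ Jψ hG hSpos hRe hIm Ifn hIfn
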